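/- arXiv:1105.3921 — 4 statements merged into one kernel-verified Lean document; each statement's English description precedes it below -/
import Mathlib

section
/- For any edge {a,b} of a simple graph G, the two compositions LC(a)∘LC(b)∘LC(a) and LC(b)∘LC(a)∘LC(b) applied to G produce the same graph. -/
/-- Local complementation of a simple graph at a vertex `a`: every edge between
two (distinct) neighbors of `a` is toggled; all other adjacencies (including
those of `a` itself) are unchanged. -/
def lc {V : Type*} (G : SimpleGraph V) (a : V) : SimpleGraph V where
  Adj b c := b ≠ c ∧ Xor' (G.Adj b c) (G.Adj a b ∧ G.Adj a c)
  symm := by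
    constructor
    intro b c h
    obtain ⟨hne, hx⟩ := h
    refine ⟨hne.symm, ?_⟩
    rw [G.adj_comm c b, and_comm]
    exact hx
  loopless := by
    constructor
    intro b h
    exact h.1 rfl

set_option maxHeartbeats 2000000 in
/-- for any edge `{a,b}` of `G`, the compositions
`LC(a)∘LC(b)∘LC(a)` and `LC(b)∘LC(a)∘LC(b)` produce the same graph. -/
theorem elc_well_defined {V : Type*} (G : SimpleGraph V) (a b : V)
    (hab : G.Adj a b) :
    lc (lc (lc G a) b) a = lc (lc (lc G b) a) b := by
  have hba := hab.symm
  have hne := hab.ne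
  have na : ¬ G.Adj a a := G.irrefl
  have nb : ¬ G.Adj b b := G.irrefl
  ext x y
  have c1 : G.Adj x a ↔ G.Adj a x := G.adj_comm x a
  have c2 : G.Adj x b ↔ G.Adj b x := G.adj_comm x b
  have c3 : G.Adj y a ↔ G.Adj a y := G.adj_comm y a
  have c4 : G.Adj y b ↔ G.Adj b y := G.adj_comm y b
  have c5 : G.Adj y x ↔ G.Adj x y := G.adj_comm y x
  simp only [lc, Xor']
  rcases eq_or_ne x a with hxa | hxa <;> rcases eq_or_ne y a with hya | hya <;>
    rcases eq_or_ne x b with hxb | hxb <;> rcases eq_or_ne y b with hyb | hyb <;>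
    by_cases p1 : G.Adj a x <;> by_cases p2 : G.Adj a y <;>
    by_cases p3 : G.Adj b x <;> by_cases p4 : G.Adj b y <;>
    by_cases p5 : G.Adj x y <;> simp_all [ne_comm]
end

section
/- Let G be a simple graph with edge {a,b} such that a and b have no common neighbors. Then ELC(a,b) = LC(a)∘LC(b)∘LC(a) transforms G into the graph G' where: the edge {a,b} is kept; a is joined to exactly the former neighbors of b other than a, and b to exactly the former neighbors of a other than b; every pair (c,d) with c ∈ N(a)\{b} and d ∈ N(b)\{a} has its edge toggled; and all other adjacencies are unchanged. -/
/-- Edge local complementation on the edge `{a,b}`. -/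
def elc {V : Type*} (G : SimpleGraph V) (a b : V) : SimpleGraph V :=
  lc (lc (lc G a) b) a

lemma lc_adj {V : Type*} (G : SimpleGraph V) (a c d : V) :
    (lc G a).Adj c d ↔ c ≠ d ∧ Xor' (G.Adj c d) (G.Adj a c ∧ G.Adj a d) := Iff.rfl

lemma elc_adj {V : Type*} (G : SimpleGraph V) (a b c d : V) :
    (elc G a b).Adj c d ↔ c ≠ d ∧ Xor' ((lc (lc G a) b).Adj c d)
      ((lc (lc G a) b).Adj a c ∧ (lc (lc G a) b).Adj a d) := Iff.rfl

set_option maxHeartbeats 1000000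

/-- if `{a,b}` is an edge of `G` and `a`, `b` have no common
neighbor, then `ELC(a,b)` keeps the edge `{a,b}`, swaps the neighborhoods of
`a` and `b` (minus each other), toggles each cross pair
`(c,d) ∈ (N(a)\{b}) × (N(b)\{a})`, and leaves all other adjacencies
unchanged. -/
theorem elc_description {V : Type*} (G : SimpleGraph V) (a b : V)
    (hab : G.Adj a b) (hdisj : ∀ c : V, ¬(G.Adj a c ∧ G.Adj b c)) :
    -- the edge {a,b} is kept
    (elc G a b).Adj a b ∧
    -- a is joined to exactly the former neighbors of b other than a
    (∀ c : V, c ≠ b → ((elc G a b).Adj a c ↔ G.Adj b c ∧ c ≠ a)) ∧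
    -- b is joined to exactly the former neighbors of a other than b
    (∀ c : V, c ≠ a → ((elc G a b).Adj b c ↔ G.Adj a c ∧ c ≠ b)) ∧
    -- each cross pair has its edge toggled
    (∀ c d : V, G.Adj a c → c ≠ b → G.Adj b d → d ≠ a →
      ((elc G a b).Adj c d ↔ ¬ G.Adj c d)) ∧
    -- all other adjacencies are unchanged
    (∀ c d : V, c ≠ a → c ≠ b → d ≠ a → d ≠ b →
      ¬(G.Adj a c ∧ G.Adj b d) → ¬(G.Adj a d ∧ G.Adj b c) →
      ((elc G a b).Adj c d ↔ G.Adj c d)) := by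
  have hne : a ≠ b := hab.ne
  have haa : ¬ G.Adj a a := G.loopless.irrefl a
  have hbb : ¬ G.Adj b b := G.loopless.irrefl b
  refine ⟨?_, ?_, ?_, ?_, ?_⟩
  · rw [elc_adj]
    simp [lc_adj, Xor', Xor, G.adj_comm b a, hab, haa, hbb, hne, hne.symm]
  · intro c hcb
    have h1 := hdisj c
    have hcc : ¬ G.Adj c c := G.loopless.irrefl c
    rw [elc_adj]
    simp only [lc_adj, Xor', Xor, G.adj_comm b a, G.adj_comm c a, G.adj_comm c b, ne_eq]
    simp [hab, haa, hbb, hcc, hne, hne.symm, hcb, hcb.symm]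
    tauto
  · intro c hca
    have h1 := hdisj c
    have hcc : ¬ G.Adj c c := G.loopless.irrefl c
    rw [elc_adj]
    simp only [lc_adj, Xor', Xor, G.adj_comm b a, G.adj_comm c a, G.adj_comm c b, ne_eq]
    simp [hab, haa, hbb, hcc, hne, hne.symm, hca, hca.symm]
    tauto
  · intro c d hac hcb hbd hda
    have h1 := hdisj c
    have h2 := hdisj d
    have hbc : ¬ G.Adj b c := fun h => hdisj c ⟨hac, h⟩
    have had : ¬ G.Adj a d := fun h => hdisj d ⟨h, hbd⟩
    have hcd : c ≠ d := by rintro rfl; exact hdisj c ⟨hac, hbd⟩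
    have hca : c ≠ a := fun h => haa (h ▸ hac)
    have hdb : d ≠ b := fun h => hbb (h ▸ hbd)
    have hcc : ¬ G.Adj c c := G.loopless.irrefl c
    have hdd : ¬ G.Adj d d := G.loopless.irrefl d
    rw [elc_adj]
    simp only [lc_adj, Xor', Xor, G.adj_comm b a, G.adj_comm c a, G.adj_comm c b,
      G.adj_comm d a, G.adj_comm d b, G.adj_comm d c, ne_eq]
    simp [hab, hac, hbd, haa, hbb, hcc, hdd, hbc, had, hne, hne.symm, hcb, hda,
      hcd, hca, hdb, hcd.symm, hca.symm, hdb.symm, hcb.symm, hda.symm]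
  · intro c d hca hcb hda hdb h1 h2
    by_cases hac : G.Adj a c
    · have hbc : ¬ G.Adj b c := fun h => hdisj c ⟨hac, h⟩
      have hbd : ¬ G.Adj b d := fun h => h1 ⟨hac, h⟩
      by_cases had : G.Adj a d
      · rw [elc_adj]
        simp only [lc_adj, Xor', Xor, G.adj_comm b a, G.adj_comm c a, G.adj_comm c b,
          G.adj_comm d a, G.adj_comm d b, G.adj_comm d c, ne_eq]
        simp [hab, hac, had, hbc, hbd, haa, hbb, G.loopless.irrefl c, G.loopless.irrefl d,
          hne, hne.symm, hca, hcb, hda, hdb, hca.symm, hcb.symm, hda.symm, hdb.symm]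
        exact ⟨fun h => h.2 h.1, fun h => ⟨h.ne, fun _ => h⟩⟩
      · rw [elc_adj]
        simp only [lc_adj, Xor', Xor, G.adj_comm b a, G.adj_comm c a, G.adj_comm c b,
          G.adj_comm d a, G.adj_comm d b, G.adj_comm d c, ne_eq]
        simp [hab, hac, had, hbc, hbd, haa, hbb, G.loopless.irrefl c, G.loopless.irrefl d,
          hne, hne.symm, hca, hcb, hda, hdb, hca.symm, hcb.symm, hda.symm, hdb.symm]
        intro h; simp [h.ne]
    · by_cases had : G.Adj a d
      · have hbd : ¬ G.Adj b d := fun h => hdisj d ⟨had, h⟩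
        have hbc : ¬ G.Adj b c := fun h => h2 ⟨had, h⟩
        rw [elc_adj]
        simp only [lc_adj, Xor', Xor, G.adj_comm b a, G.adj_comm c a, G.adj_comm c b,
          G.adj_comm d a, G.adj_comm d b, G.adj_comm d c, ne_eq]
        simp [hab, hac, had, hbc, hbd, haa, hbb, G.loopless.irrefl c, G.loopless.irrefl d,
          hne, hne.symm, hca, hcb, hda, hdb, hca.symm, hcb.symm, hda.symm, hdb.symm]
        intro h; simp [h.ne]
      · rw [elc_adj]
        simp only [lc_adj, Xor', Xor, G.adj_comm b a, G.adj_comm c a, G.adj_comm c b,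
          G.adj_comm d a, G.adj_comm d b, G.adj_comm d c, ne_eq]
        simp [hab, hac, had, haa, hbb, G.loopless.irrefl c, G.loopless.irrefl d,
          hne, hne.symm, hca, hcb, hda, hdb, hca.symm, hcb.symm, hda.symm, hdb.symm]
        by_cases hcd : c = d
        · subst hcd; simp [G.loopless.irrefl c]
        · simp only [hcd, not_false_iff, true_and, true_implies, and_true]
          tauto
end

section
/- ELC(a,b) is an involution on graphs containing the edge {a,b}: applying edge local complementation on {a,b} twice returns the original graph. -/
attribute [local simp] Xor'

set_option maxHeartbeats 4000000 in
private lemma elc_involution_aux {V : Type*} (G : SimpleGraph V) (a b : V)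
    (hab : G.Adj a b) :
    (elc G a b).Adj a b ∧ elc (elc G a b) a b = G := by
  have hba : G.Adj b a := hab.symm
  have hne : a ≠ b := hab.ne
  have hne' : b ≠ a := hab.ne'
  have haa : ¬ G.Adj a a := G.irrefl
  have hbb : ¬ G.Adj b b := G.irrefl
  refine ⟨by simp [elc, lc, hab, hba, hne, hne', haa, hbb], ?_⟩
  ext c d
  by_cases hcd : c = d
  · subst hcd; simp [elc, lc, G.irrefl]
  · have hdc : d ≠ c := Ne.symm hcd
    have sca : G.Adj c a ↔ G.Adj a c := G.adj_comm c a
    have scb : G.Adj c b ↔ G.Adj b c := G.adj_comm c b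
    have sda : G.Adj d a ↔ G.Adj a d := G.adj_comm d a
    have sdb : G.Adj d b ↔ G.Adj b d := G.adj_comm d b
    have sdc : G.Adj d c ↔ G.Adj c d := G.adj_comm d c
    rcases eq_or_ne c a with hc | hc
    · -- c = a
      rcases eq_or_ne d b with hd' | hd'
      · rw [hc, hd']
        simp [elc, lc, hab, hba, hne, hne', haa, hbb]
      · have hd : d ≠ a := fun h => hcd (hc.trans h.symm)
        have had : a ≠ d := Ne.symm hd
        have hbd : b ≠ d := Ne.symm hd'
        rw [hc]
        by_cases h2 : G.Adj a d <;> by_cases h4 : G.Adj b d <;>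
          simp [elc, lc, hab, hba, hne, hne', haa, hbb, h2, h4, hd, hd', had, hbd,
            sda, sdb]
    · rcases eq_or_ne c b with hc' | hc'
      · -- c = b
        rcases eq_or_ne d a with hd | hd
        · rw [hc', hd]
          simp [elc, lc, hab, hba, hne, hne', haa, hbb]
        · have hd' : d ≠ b := fun h => hcd (hc'.trans h.symm)
          have had : a ≠ d := Ne.symm hd
          have hbd : b ≠ d := Ne.symm hd'
          rw [hc']
          by_cases h2 : G.Adj a d <;> by_cases h4 : G.Adj b d <;>
            simp [elc, lc, hab, hba, hne, hne', haa, hbb, h2, h4, hd, hd', had, hbd,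
              sda, sdb]
      · -- c ∉ {a, b}
        have hac : a ≠ c := Ne.symm hc
        have hbc : b ≠ c := Ne.symm hc'
        rcases eq_or_ne d a with hd | hd
        · rw [hd]
          by_cases h1 : G.Adj a c <;> by_cases h3 : G.Adj b c <;>
            simp [elc, lc, hab, hba, hne, hne', haa, hbb, h1, h3, hc, hc', hac, hbc,
              sca, scb]
        · rcases eq_or_ne d b with hd' | hd'
          · rw [hd']
            by_cases h1 : G.Adj a c <;> by_cases h3 : G.Adj b c <;>
              simp [elc, lc, hab, hba, hne, hne', haa, hbb, h1, h3, hc, hc', hac, hbc,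
                sca, scb]
          · have had : a ≠ d := Ne.symm hd
            have hbd : b ≠ d := Ne.symm hd'
            by_cases h1 : G.Adj a c <;> by_cases h2 : G.Adj a d <;>
              by_cases h3 : G.Adj b c <;> by_cases h4 : G.Adj b d <;>
              by_cases h5 : G.Adj c d <;>
              simp [elc, lc, hab, hba, hne, hne', haa, hbb, h1, h2, h3, h4, h5,
                hc, hc', hd, hd', hac, hbc, had, hbd, hcd, hdc, sca, scb, sda, sdb, sdc]

/-- edge local complementation is an involution on graphs
containing the edge `{a,b}` (which remains an edge after `ELC(a,b)`). -/
theorem elc_involution {V : Type*} (G : SimpleGraph V) (a b : V)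
    (hab : G.Adj a b) :
    (elc G a b).Adj a b ∧ elc (elc G a b) a b = G := by
  exact elc_involution_aux G a b hab
end

section
/- Let G₁, G₂ be simple graphs on disjoint vertex sets with chosen vertices c₁ ∈ V₁, c₂ ∈ V₂, and let G_u be the disjoint union of G₁ and G₂ together with the added edge {c₁,c₂}. Then the graph state satisfies H_{c₁} ⊗ H_{c₂} |G_u⟩ = ± |G_H⟩, where G_H = ELC(c₁,c₂)(G_u). Concretely, with neighborhoods N(c₁) = {b₁^{(1)},…,b_n^{(1)}} in G₁ and N(c₂) = {b₁^{(2)},…,b_m^{(2)}} in G₂, |G_H⟩ is the graph state with quadratic phase p(x) = x_{c₁}x_{c₂} + x_{c₁}∑_{k'} x_{b_{k'}^{(2)}} + x_{c₂}∑_k x_{b_k^{(1)}} + ∑_{k,k'} x_{b_k^{(1)}} x_{b_{k'}^{(2)}} plus the phase terms from all edges of G₁ and G₂ not incident to c₁ or c₂. -/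
open Matrix Sum

noncomputable section

instance {V : Type*} (G : SimpleGraph V) (a : V) [DecidableEq V]
    [DecidableRel G.Adj] : DecidableRel (lc G a).Adj := fun b c =>
  inferInstanceAs (Decidable (b ≠ c ∧ Xor (G.Adj b c) (G.Adj a b ∧ G.Adj a c)))

instance {V : Type*} (G : SimpleGraph V) (a b : V) [DecidableEq V]
    [DecidableRel G.Adj] : DecidableRel (elc G a b).Adj :=
  inferInstanceAs (DecidableRel (lc (lc (lc G a) b) a).Adj)

/-- The quadratic phase polynomial `p(x) = ∑_{{i,j}∈E} x_i x_j` of a graph. -/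
def phasePoly {V : Type*} [Fintype V] [DecidableEq V] (G : SimpleGraph V)
    [DecidableRel G.Adj] (x : V → Fin 2) : ℕ :=
  ∑ e ∈ G.edgeFinset,
    Sym2.lift ⟨fun i j => (x i).val * (x j).val, fun _ _ => mul_comm _ _⟩ e

/-- The graph state `|G⟩ = 2^{−N/2} ∑_x (−1)^{p(x)} |x⟩`. -/
def gs {V : Type*} [Fintype V] [DecidableEq V] (G : SimpleGraph V)
    [DecidableRel G.Adj] : (V → Fin 2) → ℂ :=
  fun x => ((1 / Real.sqrt 2 : ℝ) : ℂ) ^ (Fintype.card V) * (-1) ^ phasePoly G x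

/-- The Hadamard gate acting on qubit `a` (identity on the other qubits). -/
def hGate {V : Type*} [Fintype V] [DecidableEq V] (a : V) :
    Matrix (V → Fin 2) (V → Fin 2) ℂ :=
  fun x y => if ∀ i, i ≠ a → x i = y i
    then ((1 / Real.sqrt 2 : ℝ) : ℂ) * (-1) ^ ((x a).val * (y a).val)
    else 0

/-- The graph `G_u`: the disjoint union of `G₁` and `G₂` together with the
added edge `{c₁, c₂}` between the two chosen core vertices. -/
def joinGraphs {N₁ N₂ : ℕ} (G₁ : SimpleGraph (Fin N₁)) (G₂ : SimpleGraph (Fin N₂))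
    (c₁ : Fin N₁) (c₂ : Fin N₂) : SimpleGraph (Fin N₁ ⊕ Fin N₂) where
  Adj u v := match u, v with
    | .inl i, .inl j => G₁.Adj i j
    | .inr i, .inr j => G₂.Adj i j
    | .inl i, .inr j => i = c₁ ∧ j = c₂
    | .inr i, .inl j => i = c₂ ∧ j = c₁
  symm := by
    constructor
    rintro (i | i) (j | j) h
    · exact h.symm
    · exact ⟨h.2, h.1⟩
    · exact ⟨h.2, h.1⟩
    · exact h.symm
  loopless := by
    constructor
    rintro (i | i) h
    · exact G₁.loopless.irrefl i h
    · exact G₂.loopless.irrefl i h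

instance {N₁ N₂ : ℕ} (G₁ : SimpleGraph (Fin N₁)) (G₂ : SimpleGraph (Fin N₂))
    (c₁ : Fin N₁) (c₂ : Fin N₂) [DecidableRel G₁.Adj] [DecidableRel G₂.Adj] :
    DecidableRel (joinGraphs G₁ G₂ c₁ c₂).Adj := fun u v =>
  match u, v with
  | .inl i, .inl j => inferInstanceAs (Decidable (G₁.Adj i j))
  | .inr i, .inr j => inferInstanceAs (Decidable (G₂.Adj i j))
  | .inl i, .inr j => inferInstanceAs (Decidable (i = c₁ ∧ j = c₂))
  | .inr i, .inl j => inferInstanceAs (Decidable (i = c₂ ∧ j = c₁))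

/-! ### Auxiliary lemmas -/

section pairs
open Finset
variable {V : Type*} [Fintype V] [DecidableEq V]
  (G : SimpleGraph V) [DecidableRel G.Adj] (x : V → ℕ)
  (r : V → V → Prop) [DecidableRel r]
  (hasym : ∀ u v, r u v → ¬ r v u) (htri : ∀ u v, u ≠ v → r u v ∨ r v u)

include hasym htri in
theorem key (P : Sym2 V → Prop) [DecidablePred P] :
    ∑ e ∈ G.edgeFinset.filter P,
      Sym2.lift ⟨fun i j => x i * x j, fun _ _ => mul_comm _ _⟩ e
    = ∑ i, ∑ j, if G.Adj i j ∧ r i j ∧ P s(i, j) then x i * x j else 0 := by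
  classical
  set S : Finset (V × V) :=
    univ.filter (fun p : V × V => G.Adj p.1 p.2 ∧ r p.1 p.2 ∧ P s(p.1, p.2)) with hS
  have himg : S.image (fun p : V × V => s(p.1, p.2)) = G.edgeFinset.filter P := by
    ext e
    refine e.ind (fun i j => ?_)
    simp only [Finset.mem_image, Finset.mem_filter, SimpleGraph.mem_edgeFinset,
      SimpleGraph.mem_edgeSet, hS, Finset.mem_univ, true_and]
    constructor
    · rintro ⟨⟨p1, p2⟩, ⟨hadj, hlt, hP⟩, hpe⟩
      obtain ⟨h1, h2⟩ | ⟨h1, h2⟩ := Sym2.eq_iff.mp hpe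
      · subst h1; subst h2; exact ⟨hadj, hP⟩
      · subst h1; subst h2; exact ⟨hadj.symm, by rwa [Sym2.eq_swap]⟩
    · rintro ⟨hadj, hP⟩
      rcases htri i j hadj.ne with h | h
      · exact ⟨(i, j), ⟨hadj, h, hP⟩, rfl⟩
      · exact ⟨(j, i), ⟨hadj.symm, h, by rwa [Sym2.eq_swap]⟩, Sym2.eq_swap⟩
  have hinj : ∀ p ∈ S, ∀ q ∈ S, s(p.1, p.2) = s(q.1, q.2) → p = q := by
    rintro ⟨p1, p2⟩ hp ⟨q1, q2⟩ hq h
    simp only [hS, Finset.mem_filter] at hp hq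
    rw [Sym2.eq_iff] at h
    rcases h with ⟨h1, h2⟩ | ⟨h1, h2⟩
    · simp only [Prod.mk.injEq]; exact ⟨h1, h2⟩
    · subst h1; subst h2; exact absurd hq.2.2.1 (hasym _ _ hp.2.2.1)
  rw [← himg, Finset.sum_image hinj, hS, ← Finset.univ_product_univ,
    Finset.sum_filter, Finset.sum_product]
  simp

include hasym htri in
theorem star (c : V) :
    (∑ i, ∑ j, if G.Adj i j ∧ r i j ∧ c ∈ s(i, j) then x i * x j else 0)
    = x c * ∑ k ∈ G.neighborFinset c, x k := by
  classical
  have hirr : ∀ u, ¬ r u u := fun u h => hasym u u h h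
  have split : ∀ i j : V, (if G.Adj i j ∧ r i j ∧ c ∈ s(i, j) then x i * x j else 0)
      = (if G.Adj i j ∧ r i j ∧ i = c then x i * x j else 0)
      + (if G.Adj i j ∧ r i j ∧ j = c then x i * x j else 0) := by
    intro i j
    by_cases hadj : G.Adj i j
    · by_cases hlt : r i j
      · by_cases hic : i = c
        · have hjc : ¬ j = c := by
            rintro rfl; rw [hic] at hlt; exact hirr _ hlt
          simp [hadj, hlt, hic, hjc, Sym2.mem_iff]
        · have hic' : ¬ c = i := fun h => hic h.symm
          by_cases hjc : j = c
          · simp [hadj, hlt, hic, hjc, Sym2.mem_iff]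
          · have hjc' : ¬ c = j := fun h => hjc h.symm
            simp [hadj, hlt, hic, hjc, hic', hjc', Sym2.mem_iff]
      · simp [hlt]
    · simp [hadj]
  simp only [split, Finset.sum_add_distrib]
  have h1 : (∑ i, ∑ j, if G.Adj i j ∧ r i j ∧ i = c then x i * x j else 0)
      = ∑ j, if G.Adj c j ∧ r c j then x c * x j else 0 := by
    rw [Finset.sum_comm]
    refine Finset.sum_congr rfl (fun j _ => ?_)
    rw [Finset.sum_eq_single c]
    · refine if_congr ?_ rfl rfl; tauto
    · intro i _ hi; simp [hi]
    · simp
  have h2 : (∑ i, ∑ j, if G.Adj i j ∧ r i j ∧ j = c then x i * x j else 0)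
      = ∑ j, if G.Adj c j ∧ r j c then x c * x j else 0 := by
    refine Finset.sum_congr rfl (fun i _ => ?_)
    rw [Finset.sum_eq_single c]
    · refine if_congr ⟨fun ⟨h1, h2, _⟩ => ⟨h1.symm, h2⟩, fun ⟨h1, h2⟩ => ⟨h1.symm, h2, rfl⟩⟩
        (mul_comm _ _) rfl
    · intro j _ hj; simp [hj]
    · simp
  rw [h1, h2, ← Finset.sum_add_distrib]
  rw [SimpleGraph.neighborFinset_eq_filter, Finset.sum_filter, Finset.mul_sum]
  refine Finset.sum_congr rfl (fun j _ => ?_)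
  by_cases hadj : G.Adj c j
  · rcases htri c j hadj.ne with h | h
    · simp [hadj, h, hasym _ _ h]
    · simp [hadj, h, hasym _ _ h]
  · simp [hadj]

include hasym htri in
theorem vertex_split (c : V) :
    (∑ i, ∑ j, if G.Adj i j ∧ r i j then x i * x j else 0)
    = x c * (∑ k ∈ G.neighborFinset c, x k)
      + ∑ e ∈ G.edgeFinset.filter (fun e => c ∉ e),
          Sym2.lift ⟨fun i j => x i * x j, fun _ _ => mul_comm _ _⟩ e := by
  classical
  rw [key G x r hasym htri (fun e => c ∉ e), ← star G x r hasym htri c,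
    ← Finset.sum_add_distrib]
  refine Finset.sum_congr rfl (fun i _ => ?_)
  rw [← Finset.sum_add_distrib]
  refine Finset.sum_congr rfl (fun j _ => ?_)
  by_cases hadj : G.Adj i j
  · by_cases hlt : r i j
    · by_cases hc : c ∈ s(i, j) <;> simp [hadj, hlt, hc]
    · simp [hlt]
  · simp [hadj]
end pairs

section srel
variable {N₁ N₂ : ℕ}

/-- The strict linear order on `Fin N₁ ⊕ Fin N₂` transported from `Fin (N₁ + N₂)`. -/
def sr (u v : Fin N₁ ⊕ Fin N₂) : Prop := finSumFinEquiv u < finSumFinEquiv v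

instance : DecidableRel (sr (N₁ := N₁) (N₂ := N₂)) := fun u v =>
  inferInstanceAs (Decidable (finSumFinEquiv u < finSumFinEquiv v))

theorem sr_asym : ∀ u v : Fin N₁ ⊕ Fin N₂, sr u v → ¬ sr v u :=
  fun _ _ h h' => absurd h (not_lt.2 h'.le)

theorem sr_tri : ∀ u v : Fin N₁ ⊕ Fin N₂, u ≠ v → sr u v ∨ sr v u := fun u v h =>
  (Ne.lt_or_gt (fun he => h (finSumFinEquiv.injective he))).imp id id

@[simp] theorem sr_ll (i j : Fin N₁) : sr (N₂ := N₂) (inl i) (inl j) ↔ i < j := by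
  simp only [sr, finSumFinEquiv_apply_left, Fin.lt_def, Fin.coe_castAdd]

@[simp] theorem sr_lr (i : Fin N₁) (j : Fin N₂) : sr (inl i) (inr j) := by
  simp only [sr, finSumFinEquiv_apply_left, finSumFinEquiv_apply_right, Fin.lt_def,
    Fin.coe_castAdd, Fin.coe_natAdd]
  omega

@[simp] theorem sr_rl (i : Fin N₂) (j : Fin N₁) : ¬ sr (inr i) (inl j) := by
  simp only [sr, finSumFinEquiv_apply_left, finSumFinEquiv_apply_right, Fin.lt_def,
    Fin.coe_castAdd, Fin.coe_natAdd]
  omega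

@[simp] theorem sr_rr (i j : Fin N₂) : sr (N₁ := N₁) (inr i) (inr j) ↔ i < j := by
  simp only [sr, finSumFinEquiv_apply_right, Fin.lt_def, Fin.coe_natAdd]
  omega
end srel

section main
open Finset
variable {N₁ N₂ : ℕ} (G₁ : SimpleGraph (Fin N₁)) (G₂ : SimpleGraph (Fin N₂))
  (c₁ : Fin N₁) (c₂ : Fin N₂) [DecidableRel G₁.Adj] [DecidableRel G₂.Adj]

local notation "A" => joinGraphs G₁ G₂ c₁ c₂

theorem adj_ll (i j : Fin N₁) : (A).Adj (inl i) (inl j) ↔ G₁.Adj i j := Iff.rfl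
theorem adj_rr (i j : Fin N₂) : (A).Adj (inr i) (inr j) ↔ G₂.Adj i j := Iff.rfl
theorem adj_lr (i : Fin N₁) (j : Fin N₂) : (A).Adj (inl i) (inr j) ↔ i = c₁ ∧ j = c₂ := Iff.rfl
theorem adj_rl (i : Fin N₂) (j : Fin N₁) : (A).Adj (inr i) (inl j) ↔ i = c₂ ∧ j = c₁ := Iff.rfl

theorem elc_ll (i j : Fin N₁) :
    (elc (A) (inl c₁) (inr c₂)).Adj (inl i) (inl j) ↔ G₁.Adj i j ∧ i ≠ c₁ ∧ j ≠ c₁ := by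
  simp only [elc, lc, adj_ll, adj_lr, adj_rl, adj_rr, ne_eq, Sum.inl.injEq, Sum.inr.injEq,
    reduceCtorEq]
  by_cases h1 : G₁.Adj i j <;> by_cases h2 : i = c₁ <;> by_cases h3 : j = c₁ <;>
    by_cases h4 : G₁.Adj c₁ i <;> by_cases h5 : G₁.Adj c₁ j <;> by_cases h6 : i = j <;>
    simp_all [Xor'] <;> tauto

theorem elc_rr (i j : Fin N₂) :
    (elc (A) (inl c₁) (inr c₂)).Adj (inr i) (inr j) ↔ G₂.Adj i j ∧ i ≠ c₂ ∧ j ≠ c₂ := by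
  simp only [elc, lc, adj_ll, adj_lr, adj_rl, adj_rr, ne_eq, Sum.inl.injEq, Sum.inr.injEq,
    reduceCtorEq]
  by_cases h1 : G₂.Adj i j <;> by_cases h2 : i = c₂ <;> by_cases h3 : j = c₂ <;>
    by_cases h4 : G₂.Adj c₂ i <;> by_cases h5 : G₂.Adj c₂ j <;> by_cases h6 : i = j <;>
    simp_all [Xor'] <;> tauto

theorem elc_lr (i : Fin N₁) (j : Fin N₂) :
    (elc (A) (inl c₁) (inr c₂)).Adj (inl i) (inr j) ↔
      (i = c₁ ∨ G₁.Adj c₁ i) ∧ (j = c₂ ∨ G₂.Adj c₂ j) := by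
  simp only [elc, lc, adj_ll, adj_lr, adj_rl, adj_rr, ne_eq, Sum.inl.injEq, Sum.inr.injEq,
    reduceCtorEq]
  by_cases h2 : i = c₁ <;> by_cases h3 : j = c₂ <;>
    by_cases h4 : G₁.Adj c₁ i <;> by_cases h5 : G₂.Adj c₂ j <;>
    simp_all [Xor'] <;> tauto

theorem elc_rl (i : Fin N₂) (j : Fin N₁) :
    (elc (A) (inl c₁) (inr c₂)).Adj (inr i) (inl j) ↔
      (j = c₁ ∨ G₁.Adj c₁ j) ∧ (i = c₂ ∨ G₂.Adj c₂ i) := by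
  rw [(elc (A) (inl c₁) (inr c₂)).adj_comm, elc_lr]

/-- The phase polynomial of the joined graph. -/
theorem phase_join (x : Fin N₁ ⊕ Fin N₂ → Fin 2) :
    phasePoly (A) x =
      (x (inl c₁)).val * (x (inr c₂)).val
      + (x (inl c₁)).val * (∑ k ∈ G₁.neighborFinset c₁, (x (inl k)).val)
      + (x (inr c₂)).val * (∑ k ∈ G₂.neighborFinset c₂, (x (inr k)).val)
      + (∑ e ∈ G₁.edgeFinset.filter (fun e => c₁ ∉ e),
          Sym2.lift ⟨fun i j => (x (inl i)).val * (x (inl j)).val,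
            fun _ _ => mul_comm _ _⟩ e)
      + ∑ e ∈ G₂.edgeFinset.filter (fun e => c₂ ∉ e),
          Sym2.lift ⟨fun i j => (x (inr i)).val * (x (inr j)).val,
            fun _ _ => mul_comm _ _⟩ e := by
  classical
  have h0 : phasePoly (A) x
      = ∑ e ∈ (A).edgeFinset.filter (fun _ => True),
          Sym2.lift ⟨fun i j => (x i).val * (x j).val, fun _ _ => mul_comm _ _⟩ e := by
    rw [Finset.filter_true]
    rfl
  rw [h0, key (A) (fun v => (x v).val) sr sr_asym sr_tri (fun _ => True)]
  simp only [and_true]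
  simp only [Fintype.sum_sum_type, adj_ll, adj_lr, adj_rl, adj_rr, sr_ll, sr_lr, sr_rl, sr_rr,
    and_true, false_and, and_false, if_false, if_true, Finset.sum_const_zero, add_zero,
    Finset.sum_add_distrib]
  rw [vertex_split G₁ (fun k => (x (inl k)).val) (· < ·) (fun _ _ => lt_asymm)
      (fun _ _ h => h.lt_or_gt) c₁,
    vertex_split G₂ (fun k => (x (inr k)).val) (· < ·) (fun _ _ => lt_asymm)
      (fun _ _ h => h.lt_or_gt) c₂]
  have hLR : (∑ i, ∑ j, if i = c₁ ∧ j = c₂ then (x (inl i)).val * (x (inr j)).val else 0)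
      = (x (inl c₁)).val * (x (inr c₂)).val := by
    simp [ite_and, Finset.sum_ite_eq']
  rw [hLR]
  ring

/-- The phase polynomial of the ELC graph. -/
theorem phase_elc (x : Fin N₁ ⊕ Fin N₂ → Fin 2) :
    phasePoly (elc (A) (inl c₁) (inr c₂)) x =
      ((x (inl c₁)).val + ∑ k ∈ G₁.neighborFinset c₁, (x (inl k)).val)
        * ((x (inr c₂)).val + ∑ k ∈ G₂.neighborFinset c₂, (x (inr k)).val)
      + (∑ e ∈ G₁.edgeFinset.filter (fun e => c₁ ∉ e),
          Sym2.lift ⟨fun i j => (x (inl i)).val * (x (inl j)).val,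
            fun _ _ => mul_comm _ _⟩ e)
      + ∑ e ∈ G₂.edgeFinset.filter (fun e => c₂ ∉ e),
          Sym2.lift ⟨fun i j => (x (inr i)).val * (x (inr j)).val,
            fun _ _ => mul_comm _ _⟩ e := by
  classical
  have h0 : phasePoly (elc (A) (inl c₁) (inr c₂)) x
      = ∑ e ∈ (elc (A) (inl c₁) (inr c₂)).edgeFinset.filter (fun _ => True),
          Sym2.lift ⟨fun i j => (x i).val * (x j).val, fun _ _ => mul_comm _ _⟩ e := by
    rw [Finset.filter_true]
    rfl
  rw [h0, key _ (fun v => (x v).val) sr sr_asym sr_tri (fun _ => True)]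
  simp only [and_true]
  simp only [Fintype.sum_sum_type, elc_ll G₁ G₂ c₁ c₂, elc_lr G₁ G₂ c₁ c₂,
    elc_rl G₁ G₂ c₁ c₂, elc_rr G₁ G₂ c₁ c₂, sr_ll, sr_lr, sr_rl, sr_rr,
    and_true, and_false, if_false, Finset.sum_const_zero, add_zero,
    Finset.sum_add_distrib]
  have hLL : (∑ i, ∑ j, if (G₁.Adj i j ∧ i ≠ c₁ ∧ j ≠ c₁) ∧ i < j
        then (x (inl i)).val * (x (inl j)).val else 0)
      = ∑ e ∈ G₁.edgeFinset.filter (fun e => c₁ ∉ e),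
          Sym2.lift ⟨fun i j => (x (inl i)).val * (x (inl j)).val,
            fun _ _ => mul_comm _ _⟩ e := by
    rw [key G₁ (fun k => (x (inl k)).val) (· < ·) (fun _ _ => lt_asymm)
      (fun _ _ h => h.lt_or_gt) (fun e => c₁ ∉ e)]
    refine Finset.sum_congr rfl fun i _ => Finset.sum_congr rfl fun j _ => ?_
    refine (if_congr ?_ rfl rfl).symm
    rw [Sym2.mem_iff]
    constructor
    · rintro ⟨h1, h2, h3⟩
      exact ⟨⟨h1, fun h => h3 (Or.inl h.symm), fun h => h3 (Or.inr h.symm)⟩, h2⟩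
    · rintro ⟨⟨h1, h2, h3⟩, h4⟩
      exact ⟨h1, h4, by rintro (h | h); exact h2 h.symm; exact h3 h.symm⟩
  have hRR : (∑ i, ∑ j, if (G₂.Adj i j ∧ i ≠ c₂ ∧ j ≠ c₂) ∧ i < j
        then (x (inr i)).val * (x (inr j)).val else 0)
      = ∑ e ∈ G₂.edgeFinset.filter (fun e => c₂ ∉ e),
          Sym2.lift ⟨fun i j => (x (inr i)).val * (x (inr j)).val,
            fun _ _ => mul_comm _ _⟩ e := by
    rw [key G₂ (fun k => (x (inr k)).val) (· < ·) (fun _ _ => lt_asymm)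
      (fun _ _ h => h.lt_or_gt) (fun e => c₂ ∉ e)]
    refine Finset.sum_congr rfl fun i _ => Finset.sum_congr rfl fun j _ => ?_
    refine (if_congr ?_ rfl rfl).symm
    rw [Sym2.mem_iff]
    constructor
    · rintro ⟨h1, h2, h3⟩
      exact ⟨⟨h1, fun h => h3 (Or.inl h.symm), fun h => h3 (Or.inr h.symm)⟩, h2⟩
    · rintro ⟨⟨h1, h2, h3⟩, h4⟩
      exact ⟨h1, h4, by rintro (h | h); exact h2 h.symm; exact h3 h.symm⟩
  have hLR : (∑ i, ∑ j, if (i = c₁ ∨ G₁.Adj c₁ i) ∧ (j = c₂ ∨ G₂.Adj c₂ j)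
        then (x (inl i)).val * (x (inr j)).val else 0)
      = ((x (inl c₁)).val + ∑ k ∈ G₁.neighborFinset c₁, (x (inl k)).val)
        * ((x (inr c₂)).val + ∑ k ∈ G₂.neighborFinset c₂, (x (inr k)).val) := by
    have factor : ∀ (i : Fin N₁) (j : Fin N₂),
        (if (i = c₁ ∨ G₁.Adj c₁ i) ∧ (j = c₂ ∨ G₂.Adj c₂ j)
          then (x (inl i)).val * (x (inr j)).val else 0)
        = (if i = c₁ ∨ G₁.Adj c₁ i then (x (inl i)).val else 0)
          * (if j = c₂ ∨ G₂.Adj c₂ j then (x (inr j)).val else 0) := by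
      intro i j
      by_cases h1 : i = c₁ ∨ G₁.Adj c₁ i <;> by_cases h2 : j = c₂ ∨ G₂.Adj c₂ j <;>
        simp [h1, h2]
    have split1 : (∑ i, if i = c₁ ∨ G₁.Adj c₁ i then (x (inl i)).val else 0)
        = (x (inl c₁)).val + ∑ k ∈ G₁.neighborFinset c₁, (x (inl k)).val := by
      have : ∀ i : Fin N₁, (if i = c₁ ∨ G₁.Adj c₁ i then (x (inl i)).val else 0)
          = (if i = c₁ then (x (inl i)).val else 0)
            + (if G₁.Adj c₁ i then (x (inl i)).val else 0) := by
        intro i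
        by_cases h1 : i = c₁
        · subst h1; simp [G₁.loopless]
        · by_cases h2 : G₁.Adj c₁ i <;> simp [h1, h2]
      simp only [this, Finset.sum_add_distrib, Finset.sum_ite_eq', Finset.mem_univ, if_true]
      rw [SimpleGraph.neighborFinset_eq_filter, Finset.sum_filter]
    have split2 : (∑ j, if j = c₂ ∨ G₂.Adj c₂ j then (x (inr j)).val else 0)
        = (x (inr c₂)).val + ∑ k ∈ G₂.neighborFinset c₂, (x (inr k)).val := by
      have : ∀ j : Fin N₂, (if j = c₂ ∨ G₂.Adj c₂ j then (x (inr j)).val else 0)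
          = (if j = c₂ then (x (inr j)).val else 0)
            + (if G₂.Adj c₂ j then (x (inr j)).val else 0) := by
        intro j
        by_cases h1 : j = c₂
        · subst h1; simp [G₂.loopless]
        · by_cases h2 : G₂.Adj c₂ j <;> simp [h1, h2]
      simp only [this, Finset.sum_add_distrib, Finset.sum_ite_eq', Finset.mem_univ, if_true]
      rw [SimpleGraph.neighborFinset_eq_filter, Finset.sum_filter]
    simp only [factor]
    rw [← Finset.sum_mul_sum, split1, split2]
  rw [hLL, hRR, hLR]
  ring
end main

theorem hGate_mulVec {V : Type*} [Fintype V] [DecidableEq V] (a : V)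
    (ψ : (V → Fin 2) → ℂ) (x : V → Fin 2) :
    (hGate a).mulVec ψ x = ((1 / Real.sqrt 2 : ℝ) : ℂ) *
      ∑ t : Fin 2, (-1) ^ ((x a).val * t.val) * ψ (Function.update x a t) := by
  classical
  have h1 : (hGate a).mulVec ψ x
      = ∑ y : V → Fin 2, (if ∀ i, i ≠ a → x i = y i
          then ((1 / Real.sqrt 2 : ℝ) : ℂ) * (-1) ^ ((x a).val * (y a).val) * ψ y
          else 0) := by
    rw [Matrix.mulVec, dotProduct]
    refine Finset.sum_congr rfl (fun y _ => ?_)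
    rw [hGate, ite_mul, zero_mul]
  rw [h1, ← Finset.sum_filter]
  have himg : (Finset.univ.filter (fun y : V → Fin 2 => ∀ i, i ≠ a → x i = y i))
      = Finset.univ.image (fun t : Fin 2 => Function.update x a t) := by
    ext y
    simp only [Finset.mem_filter, Finset.mem_image, Finset.mem_univ, true_and]
    constructor
    · intro h
      refine ⟨y a, ?_⟩
      funext i
      by_cases hia : i = a
      · subst hia; rw [Function.update_self]
      · rw [Function.update_of_ne hia]; exact h i hia
    · rintro ⟨t, rfl⟩ i hia
      rw [Function.update_of_ne hia]
  have hinj : ∀ t ∈ (Finset.univ : Finset (Fin 2)), ∀ t' ∈ Finset.univ,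
      Function.update x a t = Function.update x a t' → t = t' := by
    intro t _ t' _ h
    have := congrFun h a
    rwa [Function.update_self, Function.update_self] at this
  rw [himg, Finset.sum_image hinj, Finset.mul_sum]
  refine Finset.sum_congr rfl (fun t _ => ?_)
  rw [Function.update_self, mul_assoc]

theorem four_sum (α β : ℕ) :
    (1 : ℂ) + (-1) ^ β + (-1) ^ α + (-1) ^ (1 + α + β) = 2 * (-1) ^ (α * β) := by
  have h3 : (-1 : ℂ) ^ (1 + α + β) = -((-1) ^ α * (-1) ^ β) := by
    rw [pow_add, pow_add, pow_one]; ring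
  rw [h3]
  rcases Nat.even_or_odd α with h | h
  · rw [h.neg_one_pow, (h.mul_right β).neg_one_pow]; ring
  · rw [h.neg_one_pow, pow_mul, h.neg_one_pow]
    ring

theorem main_sum (c d : ℂ) (p q u v w1 w2 : ℕ) :
    c * ∑ s : Fin 2, (-1 : ℂ) ^ (p * s.val) * (c * ∑ t : Fin 2, (-1 : ℂ) ^ (q * t.val) *
      (d * (-1) ^ (s.val * t.val + s.val * u + t.val * v + w1 + w2)))
    = (c * c * 2) * (d * (-1) ^ ((p + u) * (q + v) + w1 + w2)) := by
  have key := four_sum (p + u) (q + v)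
  simp only [Fin.sum_univ_two, Fin.val_zero, Fin.val_one, mul_zero, mul_one, zero_mul, one_mul,
    pow_zero, zero_add, add_zero]
  linear_combination (c * c * d * (-1 : ℂ) ^ (w1 + w2)) * key

/-- `H_{c₁} ⊗ H_{c₂} |G_u⟩ = ± |G_H⟩` where `G_H = ELC(c₁,c₂)(G_u)`,
and `|G_H⟩` is the graph state with the explicit quadratic phase
`p(x) = x_{c₁}x_{c₂} + x_{c₁}∑ x_{b^{(2)}} + x_{c₂}∑ x_{b^{(1)}}
+ ∑∑ x_{b^{(1)}}x_{b^{(2)}}` plus the phase terms from all edges of `G₁`, `G₂`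
not incident to `c₁` or `c₂`. -/
theorem hadamard_elc_graph_state {N₁ N₂ : ℕ}
    (G₁ : SimpleGraph (Fin N₁)) (G₂ : SimpleGraph (Fin N₂))
    (c₁ : Fin N₁) (c₂ : Fin N₂) [DecidableRel G₁.Adj] [DecidableRel G₂.Adj] :
    ∃ ε : ℂ, (ε = 1 ∨ ε = -1) ∧
      (hGate (inl c₁ : Fin N₁ ⊕ Fin N₂) * hGate (inr c₂ : Fin N₁ ⊕ Fin N₂)).mulVec
          (gs (joinGraphs G₁ G₂ c₁ c₂))
        = ε • gs (elc (joinGraphs G₁ G₂ c₁ c₂) (inl c₁) (inr c₂)) ∧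
      gs (elc (joinGraphs G₁ G₂ c₁ c₂) (inl c₁) (inr c₂))
        = fun x : Fin N₁ ⊕ Fin N₂ → Fin 2 =>
            ((1 / Real.sqrt 2 : ℝ) : ℂ) ^ (N₁ + N₂) *
              (-1) ^ ((x (inl c₁)).val * (x (inr c₂)).val
                + (x (inl c₁)).val * ∑ k ∈ G₂.neighborFinset c₂, (x (inr k)).val
                + (x (inr c₂)).val * ∑ k ∈ G₁.neighborFinset c₁, (x (inl k)).val
                + (∑ k ∈ G₁.neighborFinset c₁, ∑ k' ∈ G₂.neighborFinset c₂,
                    (x (inl k)).val * (x (inr k')).val)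
                + (∑ e ∈ G₁.edgeFinset.filter (fun e => c₁ ∉ e),
                    Sym2.lift ⟨fun i j => (x (inl i)).val * (x (inl j)).val,
                      fun _ _ => mul_comm _ _⟩ e)
                + ∑ e ∈ G₂.edgeFinset.filter (fun e => c₂ ∉ e),
                    Sym2.lift ⟨fun i j => (x (inr i)).val * (x (inr j)).val,
                      fun _ _ => mul_comm _ _⟩ e) := by
  classical
  have hc2 : ((1 / Real.sqrt 2 : ℝ) : ℂ) * ((1 / Real.sqrt 2 : ℝ) : ℂ) * 2 = 1 := by
    have hr : (1 / Real.sqrt 2) * (1 / Real.sqrt 2) * 2 = (1 : ℝ) := by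
      rw [div_mul_div_comm, Real.mul_self_sqrt (by norm_num : (0:ℝ) ≤ 2)]
      norm_num
    calc ((1 / Real.sqrt 2 : ℝ) : ℂ) * ((1 / Real.sqrt 2 : ℝ) : ℂ) * 2
        = (((1 / Real.sqrt 2) * (1 / Real.sqrt 2) * 2 : ℝ) : ℂ) := by push_cast; ring
      _ = 1 := by rw [hr]; norm_num
  -- rearrangement of the elc phase exponent into the stated form
  have hkey : ∀ x : Fin N₁ ⊕ Fin N₂ → Fin 2,
      ((x (inl c₁)).val + ∑ k ∈ G₁.neighborFinset c₁, (x (inl k)).val)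
        * ((x (inr c₂)).val + ∑ k ∈ G₂.neighborFinset c₂, (x (inr k)).val)
      + (∑ e ∈ G₁.edgeFinset.filter (fun e => c₁ ∉ e),
          Sym2.lift ⟨fun i j => (x (inl i)).val * (x (inl j)).val,
            fun _ _ => mul_comm _ _⟩ e)
      + (∑ e ∈ G₂.edgeFinset.filter (fun e => c₂ ∉ e),
          Sym2.lift ⟨fun i j => (x (inr i)).val * (x (inr j)).val,
            fun _ _ => mul_comm _ _⟩ e)
      = (x (inl c₁)).val * (x (inr c₂)).val
        + (x (inl c₁)).val * ∑ k ∈ G₂.neighborFinset c₂, (x (inr k)).val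
        + (x (inr c₂)).val * ∑ k ∈ G₁.neighborFinset c₁, (x (inl k)).val
        + (∑ k ∈ G₁.neighborFinset c₁, ∑ k' ∈ G₂.neighborFinset c₂,
            (x (inl k)).val * (x (inr k')).val)
        + (∑ e ∈ G₁.edgeFinset.filter (fun e => c₁ ∉ e),
            Sym2.lift ⟨fun i j => (x (inl i)).val * (x (inl j)).val,
              fun _ _ => mul_comm _ _⟩ e)
        + ∑ e ∈ G₂.edgeFinset.filter (fun e => c₂ ∉ e),
            Sym2.lift ⟨fun i j => (x (inr i)).val * (x (inr j)).val,
              fun _ _ => mul_comm _ _⟩ e := by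
    intro x
    rw [← Finset.sum_mul_sum (G₁.neighborFinset c₁) (G₂.neighborFinset c₂)
      (fun k => (x (inl k)).val) (fun k' => (x (inr k')).val)]
    ring
  have hexp : ∀ x : Fin N₁ ⊕ Fin N₂ → Fin 2,
      phasePoly (elc (joinGraphs G₁ G₂ c₁ c₂) (inl c₁) (inr c₂)) x
      = (x (inl c₁)).val * (x (inr c₂)).val
        + (x (inl c₁)).val * ∑ k ∈ G₂.neighborFinset c₂, (x (inr k)).val
        + (x (inr c₂)).val * ∑ k ∈ G₁.neighborFinset c₁, (x (inl k)).val
        + (∑ k ∈ G₁.neighborFinset c₁, ∑ k' ∈ G₂.neighborFinset c₂,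
            (x (inl k)).val * (x (inr k')).val)
        + (∑ e ∈ G₁.edgeFinset.filter (fun e => c₁ ∉ e),
            Sym2.lift ⟨fun i j => (x (inl i)).val * (x (inl j)).val,
              fun _ _ => mul_comm _ _⟩ e)
        + ∑ e ∈ G₂.edgeFinset.filter (fun e => c₂ ∉ e),
            Sym2.lift ⟨fun i j => (x (inr i)).val * (x (inr j)).val,
              fun _ _ => mul_comm _ _⟩ e :=
    fun x => (phase_elc G₁ G₂ c₁ c₂ x).trans (hkey x)
  have hform : gs (elc (joinGraphs G₁ G₂ c₁ c₂) (inl c₁) (inr c₂))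
      = fun x : Fin N₁ ⊕ Fin N₂ → Fin 2 =>
          ((1 / Real.sqrt 2 : ℝ) : ℂ) ^ (N₁ + N₂) *
            (-1) ^ ((x (inl c₁)).val * (x (inr c₂)).val
              + (x (inl c₁)).val * ∑ k ∈ G₂.neighborFinset c₂, (x (inr k)).val
              + (x (inr c₂)).val * ∑ k ∈ G₁.neighborFinset c₁, (x (inl k)).val
              + (∑ k ∈ G₁.neighborFinset c₁, ∑ k' ∈ G₂.neighborFinset c₂,
                  (x (inl k)).val * (x (inr k')).val)
              + (∑ e ∈ G₁.edgeFinset.filter (fun e => c₁ ∉ e),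
                  Sym2.lift ⟨fun i j => (x (inl i)).val * (x (inl j)).val,
                    fun _ _ => mul_comm _ _⟩ e)
              + ∑ e ∈ G₂.edgeFinset.filter (fun e => c₂ ∉ e),
                  Sym2.lift ⟨fun i j => (x (inr i)).val * (x (inr j)).val,
                    fun _ _ => mul_comm _ _⟩ e) := by
    funext x
    rw [gs]
    simp only [Fintype.card_sum, Fintype.card_fin, hexp x]
  refine ⟨1, Or.inl rfl, ?_, hform⟩
  rw [one_smul]
  funext x
  rw [← Matrix.mulVec_mulVec, hGate_mulVec]
  simp only [hGate_mulVec]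
  have hb : ∀ s : Fin 2, (Function.update x (inl c₁ : Fin N₁ ⊕ Fin N₂) s) (inr c₂)
      = x (inr c₂) := fun s => Function.update_of_ne (by simp) _ _
  have hgs : ∀ s t : Fin 2, gs (joinGraphs G₁ G₂ c₁ c₂)
        (Function.update (Function.update x (inl c₁) s) (inr c₂) t)
      = ((1 / Real.sqrt 2 : ℝ) : ℂ) ^ (N₁ + N₂) *
        (-1) ^ (s.val * t.val
          + s.val * (∑ k ∈ G₁.neighborFinset c₁, (x (inl k)).val)
          + t.val * (∑ k ∈ G₂.neighborFinset c₂, (x (inr k)).val)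
          + (∑ e ∈ G₁.edgeFinset.filter (fun e => c₁ ∉ e),
              Sym2.lift ⟨fun i j => (x (inl i)).val * (x (inl j)).val,
                fun _ _ => mul_comm _ _⟩ e)
          + ∑ e ∈ G₂.edgeFinset.filter (fun e => c₂ ∉ e),
              Sym2.lift ⟨fun i j => (x (inr i)).val * (x (inr j)).val,
                fun _ _ => mul_comm _ _⟩ e) := by
    intro s t
    set y := Function.update (Function.update x (inl c₁) s) (inr c₂) t with hy
    have e1 : y (inl c₁) = s := by
      rw [hy, Function.update_of_ne (by simp), Function.update_self]
    have e2 : y (inr c₂) = t := Function.update_self _ _ _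
    have e3 : ∀ k : Fin N₁, k ≠ c₁ → y (inl k) = x (inl k) := by
      intro k hk
      rw [hy, Function.update_of_ne (by simp), Function.update_of_ne (by simp [hk])]
    have e4 : ∀ k : Fin N₂, k ≠ c₂ → y (inr k) = x (inr k) := by
      intro k hk
      rw [hy, Function.update_of_ne (by simp [hk]), Function.update_of_ne (by simp)]
    have hS1 : ∑ k ∈ G₁.neighborFinset c₁, (y (inl k)).val
        = ∑ k ∈ G₁.neighborFinset c₁, (x (inl k)).val :=
      Finset.sum_congr rfl fun k hk => by
        rw [e3 k ((G₁.mem_neighborFinset c₁ k).mp hk).ne']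
    have hS2 : ∑ k ∈ G₂.neighborFinset c₂, (y (inr k)).val
        = ∑ k ∈ G₂.neighborFinset c₂, (x (inr k)).val :=
      Finset.sum_congr rfl fun k hk => by
        rw [e4 k ((G₂.mem_neighborFinset c₂ k).mp hk).ne']
    have hR1 : (∑ e ∈ G₁.edgeFinset.filter (fun e => c₁ ∉ e),
          Sym2.lift ⟨fun i j => (y (inl i)).val * (y (inl j)).val,
            fun _ _ => mul_comm _ _⟩ e)
        = ∑ e ∈ G₁.edgeFinset.filter (fun e => c₁ ∉ e),
          Sym2.lift ⟨fun i j => (x (inl i)).val * (x (inl j)).val,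
            fun _ _ => mul_comm _ _⟩ e := by
      refine Finset.sum_congr rfl fun e he => ?_
      obtain ⟨hin, hnc⟩ := Finset.mem_filter.mp he
      induction e using Sym2.ind with
      | _ i j =>
        simp only [Sym2.lift_mk]
        rw [Sym2.mem_iff] at hnc
        push_neg at hnc
        rw [e3 i (fun h => hnc.1 h.symm), e3 j (fun h => hnc.2 h.symm)]
    have hR2 : (∑ e ∈ G₂.edgeFinset.filter (fun e => c₂ ∉ e),
          Sym2.lift ⟨fun i j => (y (inr i)).val * (y (inr j)).val,
            fun _ _ => mul_comm _ _⟩ e)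
        = ∑ e ∈ G₂.edgeFinset.filter (fun e => c₂ ∉ e),
          Sym2.lift ⟨fun i j => (x (inr i)).val * (x (inr j)).val,
            fun _ _ => mul_comm _ _⟩ e := by
      refine Finset.sum_congr rfl fun e he => ?_
      obtain ⟨hin, hnc⟩ := Finset.mem_filter.mp he
      induction e using Sym2.ind with
      | _ i j =>
        simp only [Sym2.lift_mk]
        rw [Sym2.mem_iff] at hnc
        push_neg at hnc
        rw [e4 i (fun h => hnc.1 h.symm), e4 j (fun h => hnc.2 h.symm)]
    rw [gs]
    simp only [Fintype.card_sum, Fintype.card_fin]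
    rw [phase_join G₁ G₂ c₁ c₂ y, e1, e2, hS1, hS2, hR1, hR2]
  simp only [hb, hgs]
  rw [main_sum, hc2, one_mul, hform]
  rw [hkey x]
end
end
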